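/- Let m ≥ 1, 0 < s < 1, 1 ≤ p < ∞, let Ω ⊂ ℝ^m be open, let φ be a mollifier on B^m_1, and let ψ ∈ C^∞(Ω) be a nonnegative function with ‖Dψ‖_{L^∞(Ω)} < 1. Then for every measurable u : Ω → ℝ^ν and every open set ω ⊂ { x ∈ Ω : dist(x, ∂Ω) > ψ(x) }, |φ_ψ ∗ u − u|_{W^{s,p}(ω)} ≤ sup_{v ∈ B^m_1} |τ_{ψv}(u) − u|_{W^{s,p}(ω)}, where for v ∈ B^m_1 the map τ_{ψv}(u) : ω → ℝ^ν is defined by τ_{ψv}(u)(x) = u(x + ψ(x) v). -/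

import Mathlib

open MeasureTheory Set Metric
open scoped ENNReal
noncomputable section

/-- `ℝ^m` with the Euclidean norm. -/
abbrev Eucl (n : ℕ) : Type := EuclideanSpace ℝ (Fin n)

/-- The `p`-th power of the Gagliardo seminorm. -/
noncomputable def gagliardoPow {α : Type*} [NormedAddCommGroup α] (m : ℕ) (σ p : ℝ)
    (A : Set (Eucl m)) (u : Eucl m → α) : ℝ≥0∞ :=
  ∫⁻ x in A, ∫⁻ y in A, (‖u x - u y‖₊ : ℝ≥0∞) ^ p / (‖x - y‖₊ : ℝ≥0∞) ^ ((m : ℝ) + σ * p)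

/-- The Gagliardo seminorm `|u|_{W^{σ,p}(A)}`. -/
noncomputable def gagliardoSeminorm {α : Type*} [NormedAddCommGroup α] (m : ℕ) (σ p : ℝ)
    (A : Set (Eucl m)) (u : Eucl m → α) : ℝ≥0∞ :=
  gagliardoPow m σ p A u ^ (1 / p)

/-- `φ` is a mollifier: a smooth nonnegative radial function, compactly supported in the open
unit ball `B^m_1`, with integral `1`. -/
def IsMollifier (m : ℕ) (φ : Eucl m → ℝ) : Prop :=
  ContDiff ℝ (⊤ : ℕ∞) φ ∧ HasCompactSupport φ ∧ tsupport φ ⊆ Metric.ball 0 1 ∧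
    (∀ x, 0 ≤ φ x) ∧ (∀ x y : Eucl m, ‖x‖ = ‖y‖ → φ x = φ y) ∧
    (∫ x in Metric.ball (0 : Eucl m) 1, φ x) = 1

/-- Congruence for `gagliardoPow`: it only depends on values on `A`. -/
lemma gagliardoPow_congr {α : Type*} [NormedAddCommGroup α] {m : ℕ} {σ p : ℝ}
    {A : Set (Eucl m)} (hA : MeasurableSet A) {u v : Eucl m → α}
    (h : ∀ x ∈ A, u x = v x) :
    gagliardoPow m σ p A u = gagliardoPow m σ p A v := by
  unfold gagliardoPow
  refine setLIntegral_congr_fun hA (fun x hx => ?_)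
  refine setLIntegral_congr_fun hA (fun y hy => ?_)
  rw [h x hx, h y hy]

/-- Congruence for `gagliardoSeminorm`: it only depends on values on `A`. -/
lemma gagliardoSeminorm_congr {α : Type*} [NormedAddCommGroup α] {m : ℕ} {σ p : ℝ}
    {A : Set (Eucl m)} (hA : MeasurableSet A) {u v : Eucl m → α}
    (h : ∀ x ∈ A, u x = v x) :
    gagliardoSeminorm m σ p A u = gagliardoSeminorm m σ p A v := by
  unfold gagliardoSeminorm
  rw [gagliardoPow_congr hA h]

/-- Jensen's inequality for `t ↦ t^p`, `p ≥ 1`, on a probability measure, via Hölder. -/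
lemma lintegral_rpow_jensen {α : Type*} [MeasurableSpace α] {μ : Measure α}
    [IsProbabilityMeasure μ] {g : α → ℝ≥0∞} (hg : AEMeasurable g μ) {p : ℝ} (hp : 1 ≤ p) :
    (∫⁻ a, g a ∂μ) ^ p ≤ ∫⁻ a, g a ^ p ∂μ := by
  rcases eq_or_lt_of_le hp with hp1 | hp1
  · simp [← hp1]
  · have hp0 : (0:ℝ) < p := lt_trans one_pos hp1
    set q : ℝ := p / (p - 1) with hq
    have hpq : p.HolderConjugate q := by
      rw [hq]
      exact (Real.holderConjugate_iff_eq_conjExponent hp1).mpr rfl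
    have h := ENNReal.lintegral_mul_le_Lp_mul_Lq μ hpq hg
      (aemeasurable_const (b := (1:ℝ≥0∞)))
    simp only [Pi.mul_apply, mul_one, ENNReal.one_rpow, lintegral_one, measure_univ,
      ENNReal.one_rpow] at h
    have h' : ∫⁻ a, g a ∂μ ≤ (∫⁻ a, g a ^ p ∂μ) ^ (1 / p) := by
      simpa using h
    calc (∫⁻ a, g a ∂μ) ^ p ≤ ((∫⁻ a, g a ^ p ∂μ) ^ (1 / p)) ^ p :=
          ENNReal.rpow_le_rpow h' hp0.le
      _ = ∫⁻ a, g a ^ p ∂μ := by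
          rw [← ENNReal.rpow_mul, one_div, inv_mul_cancel₀ hp0.ne', ENNReal.rpow_one]

/-- **Comparison of adaptive smoothing with translations in the Gagliardo seminorm.** -/
theorem adaptive_smoothing_translation_bound
    (m ν : ℕ) (hm : 1 ≤ m) (s p : ℝ) (hs0 : 0 < s) (hs1 : s < 1) (hp : 1 ≤ p)
    (Ω : Set (Eucl m)) (hΩ : IsOpen Ω)
    (φ : Eucl m → ℝ) (hφ : IsMollifier m φ)
    (ψ : Eucl m → ℝ) (hψs : ContDiffOn ℝ (⊤ : ℕ∞) ψ Ω) (hψ0 : ∀ x ∈ Ω, 0 ≤ ψ x)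
    (K : ℝ) (hK1 : K < 1) (hDψ : ∀ x ∈ Ω, ‖fderivWithin ℝ ψ Ω x‖ ≤ K)
    (u : Eucl m → Eucl ν) (hum : Measurable u)
    (hloc : LocallyIntegrableOn u Ω)
    (ω : Set (Eucl m)) (hωo : IsOpen ω)
    (hω : ω ⊆ {x ∈ Ω | ENNReal.ofReal (ψ x) < EMetric.infEdist x (frontier Ω)}) :
    gagliardoSeminorm m s p ω
        (fun x => (∫ z in Metric.ball (0 : Eucl m) 1, φ z • u (x + ψ x • z)) - u x)
      ≤ ⨆ v ∈ Metric.ball (0 : Eucl m) 1,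
          gagliardoSeminorm m s p ω (fun x => u (x + ψ x • v) - u x) := by
  classical
  obtain ⟨hφsm, hφcs, hφsupp, hφ0, hφrad, hφint1⟩ := hφ
  have hp0 : (0:ℝ) < p := lt_of_lt_of_le one_pos hp
  have hωm : MeasurableSet ω := hωo.measurableSet
  have hφcont : Continuous φ := hφsm.continuous
  have hφInt : Integrable φ (volume.restrict (Metric.ball (0:Eucl m) 1)) :=
    (hφcont.integrable_of_hasCompactSupport hφcs).restrict
  -- a measurable extension of ψ
  set Ψ : Eucl m → ℝ := fun x => if x ∈ ω then ψ x else 0 with hΨdef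
  have hΨψ : ∀ x ∈ ω, Ψ x = ψ x := fun x hx => if_pos hx
  have hψcont : ContinuousOn ψ ω := (hψs.continuousOn).mono (fun x hx => (hω hx).1)
  have hΨm : Measurable Ψ := by
    apply measurable_of_isOpen
    intro t ht
    have : Ψ ⁻¹' t = (ω ∩ ψ ⁻¹' t) ∪ (ωᶜ ∩ (if (0:ℝ) ∈ t then Set.univ else ∅)) := by
      ext x
      by_cases hx : x ∈ ω
      · by_cases h0 : (0:ℝ) ∈ t <;> simp [Ψ, hx, h0]
      · by_cases h0 : (0:ℝ) ∈ t <;> simp [Ψ, hx, h0]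
    rw [this]
    refine ((hψcont.isOpen_inter_preimage hωo ht).measurableSet).union
      ((hωo.isClosed_compl.measurableSet).inter ?_)
    split <;> simp
  have hΨ0 : ∀ x, 0 ≤ Ψ x := by
    intro x
    by_cases hx : x ∈ ω
    · rw [hΨψ x hx]; exact hψ0 x (hω hx).1
    · simp [Ψ, hx]
  -- the closed ball of radius Ψ x is inside Ω
  have hball : ∀ x ∈ ω, Metric.closedBall x (Ψ x) ⊆ Ω := by
    intro x hx
    have hxΩ : x ∈ Ω := (hω hx).1
    have hlt : ENNReal.ofReal (Ψ x) < EMetric.infEdist x (frontier Ω) := by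
      rw [hΨψ x hx]; exact (hω hx).2
    have hdisj : Disjoint (EMetric.closedBall x (ENNReal.ofReal (Ψ x))) (frontier Ω) :=
      EMetric.disjoint_closedBall_of_lt_infEdist hlt
    have hsub : Metric.closedBall x (Ψ x) ⊆ EMetric.closedBall x (ENNReal.ofReal (Ψ x)) := by
      intro y hy
      change edist y x ≤ _
      rw [edist_dist]
      exact ENNReal.ofReal_le_ofReal hy
    refine (convex_closedBall x (Ψ x)).isPreconnected.subset_of_closure_inter_subset hΩ
      ⟨x, Metric.mem_closedBall_self (hΨ0 x), hxΩ⟩ ?_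
    intro y ⟨hyc, hyb⟩
    by_contra hyΩ
    have hyf : y ∈ frontier Ω := by
      rw [hΩ.frontier_eq]
      exact ⟨hyc, hyΩ⟩
    exact (Set.disjoint_left.mp hdisj (hsub hyb)) hyf
  -- integrability of the rescaled function
  have hint : ∀ x ∈ ω, IntegrableOn (fun z : Eucl m => u (x + Ψ x • z))
      (Metric.ball (0:Eucl m) 1) volume := by
    intro x hx
    rcases eq_or_lt_of_le (hΨ0 x) with hc | hc
    · have : IntegrableOn (fun _ : Eucl m => u x) (Metric.ball (0:Eucl m) 1) volume :=
        integrableOn_const measure_ball_lt_top.ne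
      refine this.congr_fun ?_ measurableSet_ball
      intro z _
      simp only [← hc, zero_smul, add_zero]
    · have huI : IntegrableOn u (Metric.closedBall x (Ψ x)) volume :=
        hloc.integrableOn_compact_subset (hball x hx) (isCompact_closedBall x _)
      set g : Eucl m → Eucl ν := (Metric.closedBall x (Ψ x)).indicator u with hg
      have hgInt : Integrable g volume :=
        (integrable_indicator_iff (measurableSet_closedBall)).mpr huI
      have h1 : Integrable (fun t => g (x + t)) volume := hgInt.comp_add_left x
      have h2 : Integrable (fun z => g (x + Ψ x • z)) volume := h1.comp_smul hc.ne'
      refine h2.integrableOn.congr_fun ?_ measurableSet_ball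
      intro z hz
      have hmem : x + Ψ x • z ∈ Metric.closedBall x (Ψ x) := by
        rw [Metric.mem_closedBall, dist_comm, dist_self_add_right, norm_smul,
          Real.norm_eq_abs, abs_of_nonneg hc.le]
        calc Ψ x * ‖z‖ ≤ Ψ x * 1 := by
              exact mul_le_mul_of_nonneg_left (le_of_lt (mem_ball_zero_iff.mp hz)) hc.le
          _ = Ψ x := mul_one _
      simp [g, Set.indicator_of_mem hmem]
  -- the probability measure with density φ on the unit ball
  set dens : Eucl m → ℝ≥0∞ := fun z => ENNReal.ofReal (φ z) with hdens
  have hdensm : Measurable dens := ENNReal.measurable_ofReal.comp hφcont.measurable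
  set μφ : Measure (Eucl m) :=
    (volume.restrict (Metric.ball (0:Eucl m) 1)).withDensity dens with hμφ
  have hμφ_prob : IsProbabilityMeasure μφ := by
    constructor
    rw [hμφ, withDensity_apply _ MeasurableSet.univ, Measure.restrict_univ]
    rw [hdens, ← ofReal_integral_eq_lintegral_ofReal hφInt
      (Filter.Eventually.of_forall hφ0)]
    rw [show (∫ z, φ z ∂(volume.restrict (Metric.ball (0:Eucl m) 1))) = 1 from hφint1]
    exact ENNReal.ofReal_one
  haveI := hμφ_prob
  have hae_ball : ∀ᵐ z ∂μφ, z ∈ Metric.ball (0:Eucl m) 1 :=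
    (withDensity_absolutelyContinuous _ _).ae_le (ae_restrict_mem measurableSet_ball)
  -- notation
  set H : Eucl m → Eucl m → Eucl ν := fun v x => u (x + Ψ x • v) - u x with hH
  set F : Eucl m → Eucl ν :=
    fun x => (∫ z in Metric.ball (0:Eucl m) 1, φ z • u (x + Ψ x • z)) - u x with hF
  set T : ℝ≥0∞ := ⨆ v ∈ Metric.ball (0 : Eucl m) 1,
      gagliardoSeminorm m s p ω (fun x => u (x + ψ x • v) - u x) with hT
  -- bound on φ
  obtain ⟨C, hC⟩ := hφcs.exists_bound_of_continuous hφcont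
  -- integrability of φ • u(x + Ψ x z)
  have hsmeas : ∀ x : Eucl m, Measurable (fun z : Eucl m => u (x + Ψ x • z)) := by
    intro x
    exact hum.comp ((continuous_const.add (continuous_id.const_smul (Ψ x))).measurable)
  have hIφ : ∀ x ∈ ω, IntegrableOn (fun z => φ z • u (x + Ψ x • z))
      (Metric.ball (0:Eucl m) 1) volume := by
    intro x hx
    refine Integrable.mono' (((hint x hx).norm.const_mul C)) ?_ ?_
    · exact (hφcont.measurable.smul (hsmeas x)).aestronglyMeasurable
    · refine Filter.Eventually.of_forall fun z => ?_
      rw [norm_smul]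
      exact mul_le_mul_of_nonneg_right (hC z) (norm_nonneg _)
  -- integrability of φ • H
  have hIφH : ∀ x ∈ ω, IntegrableOn (fun z => φ z • H z x)
      (Metric.ball (0:Eucl m) 1) volume := by
    intro x hx
    have h := (hIφ x hx).sub (hφInt.smul_const (u x))
    refine IntegrableOn.congr_fun h ?_ measurableSet_ball
    intro z _
    exact (smul_sub (φ z) (u (x + Ψ x • z)) (u x)).symm
  -- representation of F on ω
  have hrep : ∀ x ∈ ω, F x = ∫ z in Metric.ball (0:Eucl m) 1, φ z • H z x := by
    intro x hx
    have h1 : (∫ z in Metric.ball (0:Eucl m) 1, φ z • (u x)) = u x := by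
      rw [integral_smul_const, hφint1, one_smul]
    rw [hF]
    simp only
    rw [← h1, ← integral_sub (hIφ x hx) (hφInt.smul_const (u x))]
    congr 1
    funext z
    exact (smul_sub (φ z) (u (x + Ψ x • z)) (u x)).symm
  -- the pointwise key inequality
  have hHmeas : ∀ x y : Eucl m, Measurable (fun z => (‖H z x - H z y‖₊ : ℝ≥0∞)) := by
    intro x y
    exact (((hsmeas x).sub measurable_const).sub
      ((hsmeas y).sub measurable_const)).enorm
  have key : ∀ x ∈ ω, ∀ y ∈ ω,
      (‖F x - F y‖₊ : ℝ≥0∞) ^ p / (‖x - y‖₊ : ℝ≥0∞) ^ ((m : ℝ) + s * p)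
        ≤ ∫⁻ z, (‖H z x - H z y‖₊ : ℝ≥0∞) ^ p
            / (‖x - y‖₊ : ℝ≥0∞) ^ ((m : ℝ) + s * p) ∂μφ := by
    intro x hx y hy
    have hdiff : F x - F y = ∫ z in Metric.ball (0:Eucl m) 1, φ z • (H z x - H z y) := by
      rw [hrep x hx, hrep y hy, ← integral_sub (hIφH x hx) (hIφH y hy)]
      congr 1
      funext z
      exact (smul_sub (φ z) (H z x) (H z y)).symm
    have step1 : (‖F x - F y‖₊ : ℝ≥0∞) ≤ ∫⁻ z, (‖H z x - H z y‖₊ : ℝ≥0∞) ∂μφ := by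
      rw [hdiff]
      refine le_trans (enorm_integral_le_lintegral_enorm _) ?_
      rw [hμφ, lintegral_withDensity_eq_lintegral_mul _ hdensm (hHmeas x y)]
      refine le_of_eq (lintegral_congr fun z => ?_)
      have hdz : (dens * fun z => (‖H z x - H z y‖₊ : ℝ≥0∞)) z
          = ENNReal.ofReal (φ z) * (‖H z x - H z y‖₊ : ℝ≥0∞) := rfl
      rw [hdz, enorm_smul, Real.enorm_eq_ofReal (hφ0 z)]
      rfl
    have step2 : (‖F x - F y‖₊ : ℝ≥0∞) ^ p
        ≤ ∫⁻ z, (‖H z x - H z y‖₊ : ℝ≥0∞) ^ p ∂μφ := by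
      refine le_trans (ENNReal.rpow_le_rpow step1 hp0.le) ?_
      exact lintegral_rpow_jensen (hHmeas x y).aemeasurable hp
    rw [div_eq_mul_inv]
    simp_rw [div_eq_mul_inv]
    rw [lintegral_mul_const'' _ ((hHmeas x y).pow_const p).aemeasurable]
    exact mul_le_mul_left step2 _
  -- joint measurability helpers
  have hjm2 : ∀ x : Eucl m, Measurable (Function.uncurry fun (y z : Eucl m) =>
      (‖H z x - H z y‖₊ : ℝ≥0∞) ^ p
        / (‖x - y‖₊ : ℝ≥0∞) ^ ((m : ℝ) + s * p)) := by
    intro x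
    have h1 : Measurable fun q : Eucl m × Eucl m => u (x + Ψ x • q.2) :=
      hum.comp (measurable_const.add ((hΨm.comp measurable_const).smul measurable_snd))
    have h2 : Measurable fun q : Eucl m × Eucl m => u (q.1 + Ψ q.1 • q.2) :=
      hum.comp (measurable_fst.add ((hΨm.comp measurable_fst).smul measurable_snd))
    have h3 : Measurable fun q : Eucl m × Eucl m => u q.1 := hum.comp measurable_fst
    have hnum : Measurable fun q : Eucl m × Eucl m =>
        (‖(u (x + Ψ x • q.2) - u x) - (u (q.1 + Ψ q.1 • q.2) - u q.1)‖₊ : ℝ≥0∞) ^ p :=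
      (((h1.sub measurable_const).sub (h2.sub h3)).enorm).pow_const p
    have hden : Measurable fun q : Eucl m × Eucl m =>
        ((‖x - q.1‖₊ : ℝ≥0∞) ^ ((m : ℝ) + s * p))⁻¹ := by
      have : Measurable fun q : Eucl m × Eucl m => (‖x - q.1‖₊ : ℝ≥0∞) :=
        ((continuous_const.sub continuous_fst).measurable).enorm
      exact (this.pow_const _).inv
    exact hnum.mul hden
  -- main estimate
  have main : gagliardoPow m s p ω F
      ≤ ∫⁻ z, gagliardoPow m s p ω (H z) ∂μφ := by
    have hjm3 : Measurable (fun q : Eucl m × Eucl m =>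
        ∫⁻ y in ω, (‖H q.2 q.1 - H q.2 y‖₊ : ℝ≥0∞) ^ p
          / (‖q.1 - y‖₊ : ℝ≥0∞) ^ ((m : ℝ) + s * p)) := by
      apply Measurable.lintegral_prod_right
      have h1 : Measurable fun q : (Eucl m × Eucl m) × Eucl m =>
          u (q.1.1 + Ψ q.1.1 • q.1.2) :=
        hum.comp ((measurable_fst.comp measurable_fst).add
          (((hΨm.comp (measurable_fst.comp measurable_fst))).smul
            (measurable_snd.comp measurable_fst)))
      have h2 : Measurable fun q : (Eucl m × Eucl m) × Eucl m => u q.1.1 :=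
        hum.comp (measurable_fst.comp measurable_fst)
      have h3 : Measurable fun q : (Eucl m × Eucl m) × Eucl m =>
          u (q.2 + Ψ q.2 • q.1.2) :=
        hum.comp (measurable_snd.add
          ((hΨm.comp measurable_snd).smul (measurable_snd.comp measurable_fst)))
      have h4 : Measurable fun q : (Eucl m × Eucl m) × Eucl m => u q.2 :=
        hum.comp measurable_snd
      have hnum := ((((h1.sub h2).sub (h3.sub h4))).enorm).pow_const p
      have hden : Measurable fun q : (Eucl m × Eucl m) × Eucl m =>
          ((‖q.1.1 - q.2‖₊ : ℝ≥0∞) ^ ((m : ℝ) + s * p))⁻¹ := by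
        have : Measurable fun q : (Eucl m × Eucl m) × Eucl m =>
            (‖q.1.1 - q.2‖₊ : ℝ≥0∞) :=
          (((continuous_fst.comp continuous_fst).sub continuous_snd).measurable).enorm
        exact (this.pow_const _).inv
      exact hnum.mul hden
    have st1 : gagliardoPow m s p ω F
        ≤ ∫⁻ x in ω, ∫⁻ z, (∫⁻ y in ω,
            (‖H z x - H z y‖₊ : ℝ≥0∞) ^ p
              / (‖x - y‖₊ : ℝ≥0∞) ^ ((m : ℝ) + s * p)) ∂μφ := by
      unfold gagliardoPow
      refine lintegral_mono_ae ((ae_restrict_iff' hωm).mpr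
        (Filter.Eventually.of_forall fun x hx => ?_))
      calc ∫⁻ y in ω, (‖F x - F y‖₊ : ℝ≥0∞) ^ p
              / (‖x - y‖₊ : ℝ≥0∞) ^ ((m : ℝ) + s * p)
          ≤ ∫⁻ y in ω, ∫⁻ z, (‖H z x - H z y‖₊ : ℝ≥0∞) ^ p
              / (‖x - y‖₊ : ℝ≥0∞) ^ ((m : ℝ) + s * p) ∂μφ := by
            refine lintegral_mono_ae ((ae_restrict_iff' hωm).mpr
              (Filter.Eventually.of_forall fun y hy => ?_))
            exact key x hx y hy
        _ = ∫⁻ z, (∫⁻ y in ω, (‖H z x - H z y‖₊ : ℝ≥0∞) ^ p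
              / (‖x - y‖₊ : ℝ≥0∞) ^ ((m : ℝ) + s * p)) ∂μφ :=
            lintegral_lintegral_swap ((hjm2 x).aemeasurable)
    refine le_trans st1 (le_of_eq ?_)
    calc ∫⁻ x in ω, ∫⁻ z, (∫⁻ y in ω,
            (‖H z x - H z y‖₊ : ℝ≥0∞) ^ p
              / (‖x - y‖₊ : ℝ≥0∞) ^ ((m : ℝ) + s * p)) ∂μφ
        = ∫⁻ z, (∫⁻ x in ω, ∫⁻ y in ω,
            (‖H z x - H z y‖₊ : ℝ≥0∞) ^ p
              / (‖x - y‖₊ : ℝ≥0∞) ^ ((m : ℝ) + s * p)) ∂μφ :=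
          lintegral_lintegral_swap (hjm3.aemeasurable)
      _ = ∫⁻ z, gagliardoPow m s p ω (H z) ∂μφ := rfl
  -- for z in the unit ball, the Gagliardo power of H z is at most T^p
  have hTz : ∀ z ∈ Metric.ball (0:Eucl m) 1, gagliardoPow m s p ω (H z) ≤ T ^ p := by
    intro z hz
    have hcongr : gagliardoPow m s p ω (H z)
        = gagliardoPow m s p ω (fun x => u (x + ψ x • z) - u x) := by
      refine gagliardoPow_congr hωm fun x hx => ?_
      rw [hH]
      simp only
      rw [hΨψ x hx]
    rw [hcongr]
    have h1 : gagliardoPow m s p ω (fun x => u (x + ψ x • z) - u x)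
        = (gagliardoSeminorm m s p ω (fun x => u (x + ψ x • z) - u x)) ^ p := by
      unfold gagliardoSeminorm
      rw [← ENNReal.rpow_mul, one_div, inv_mul_cancel₀ hp0.ne', ENNReal.rpow_one]
    rw [h1]
    refine ENNReal.rpow_le_rpow ?_ hp0.le
    exact le_iSup₂ (f := fun v (_ : v ∈ Metric.ball (0:Eucl m) 1) =>
      gagliardoSeminorm m s p ω (fun x => u (x + ψ x • v) - u x)) z hz
  -- conclude
  have hF0 : gagliardoSeminorm m s p ω
      (fun x => (∫ z in Metric.ball (0 : Eucl m) 1, φ z • u (x + ψ x • z)) - u x)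
      = gagliardoSeminorm m s p ω F := by
    refine gagliardoSeminorm_congr hωm fun x hx => ?_
    rw [hF]
    simp only
    rw [hΨψ x hx]
  rw [hF0]
  have hfinal : gagliardoPow m s p ω F ≤ T ^ p := by
    refine le_trans main ?_
    calc ∫⁻ z, gagliardoPow m s p ω (H z) ∂μφ
        ≤ ∫⁻ _, T ^ p ∂μφ := by
          refine lintegral_mono_ae ?_
          filter_upwards [hae_ball] with z hz
          exact hTz z hz
      _ = T ^ p := by rw [lintegral_const, measure_univ, mul_one]
  calc gagliardoSeminorm m s p ω F = (gagliardoPow m s p ω F) ^ (1/p) := rfl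
    _ ≤ (T ^ p) ^ (1/p) := ENNReal.rpow_le_rpow hfinal (by positivity)
    _ = T := by rw [← ENNReal.rpow_mul, mul_one_div_cancel hp0.ne', ENNReal.rpow_one]
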